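/- arXiv:1208.5831 — 5 statements merged into one kernel-verified Lean document; each statement's English description precedes it below -/
import Mathlib

section
/- Let X be a Banach space, T a bounded operator on X, and Y a closed subspace of X. Then Y is almost-invariant for T (i.e., there exists a finite-dimensional subspace M with T(Y) ⊆ Y + M) if and only if Y is invariant under T − F for some finite-rank bounded operator F on X. -/
/-- A closed subspace `Y` of a complex Banach space is almost-invariant for `T`
(i.e. `T(Y) ⊆ Y + M` for some finite-dimensional `M`) iff `Y` is invariant under
`T - F` for some finite-rank bounded operator `F`. -/
theorem almost_invariant_iff_invariant_perturbation
    {X : Type*} [NormedAddCommGroup X] [NormedSpace ℂ X] [CompleteSpace X]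
    (T : X →L[ℂ] X) (Y : Submodule ℂ X) (hY : IsClosed (Y : Set X)) :
    (∃ M : Submodule ℂ X, FiniteDimensional ℂ M ∧ ∀ y ∈ Y, T y ∈ Y ⊔ M) ↔
    (∃ F : X →L[ℂ] X, FiniteDimensional ℂ (LinearMap.range (F : X →ₗ[ℂ] X)) ∧
      ∀ y ∈ Y, (T - F) y ∈ Y) := by
  constructor
  · rintro ⟨M, hM, hTY⟩
    haveI : IsClosed (Y : Set X) := hY
    -- quotient map as a continuous linear map
    let q : X →L[ℂ] X ⧸ Y := ⟨Y.mkQ, continuous_quot_mk⟩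
    -- the image of M in the quotient
    let N : Submodule ℂ (X ⧸ Y) := M.map Y.mkQ
    haveI : FiniteDimensional ℂ N := Module.Finite.map M Y.mkQ
    -- continuous projection onto N
    obtain ⟨π, hπ⟩ := Submodule.ClosedComplemented.of_finiteDimensional N
    -- linear lift of N back to X
    obtain ⟨ι, hι⟩ := Module.projective_lifting_property Y.mkQ N.subtype
      Y.mkQ_surjective
    let ιL : N →L[ℂ] X := LinearMap.toContinuousLinearMap ι
    refine ⟨ιL.comp (π.comp (q.comp T)), ?_, ?_⟩
    · have hle : LinearMap.range ((ιL.comp (π.comp (q.comp T)) : X →L[ℂ] X) :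
          X →ₗ[ℂ] X) ≤ LinearMap.range (ι : N →ₗ[ℂ] X) := by
        rintro x ⟨z, rfl⟩
        exact ⟨_, rfl⟩
      exact Submodule.finiteDimensional_of_le hle
    · intro y hy
      have hmem : Y.mkQ (T y) ∈ N := by
        rcases Submodule.mem_sup.mp (hTY y hy) with ⟨a, ha, b, hb, hab⟩
        have : Y.mkQ (T y) = Y.mkQ b := by
          rw [← hab]
          simp [Submodule.Quotient.mk_add, (Submodule.Quotient.mk_eq_zero Y).mpr ha,
            Submodule.mkQ_apply]
        rw [this]
        exact ⟨b, hb, rfl⟩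
      have key : Y.mkQ ((T - ιL.comp (π.comp (q.comp T))) y) = 0 := by
        have h1 : Y.mkQ (ι (π (Y.mkQ (T y)))) = (π (Y.mkQ (T y)) : X ⧸ Y) := by
          have := congrArg (fun f => f (π (Y.mkQ (T y)))) hι
          simpa using this
        have h2 : π (Y.mkQ (T y)) = ⟨Y.mkQ (T y), hmem⟩ := hπ ⟨Y.mkQ (T y), hmem⟩
        simp only [ContinuousLinearMap.sub_apply, map_sub, ContinuousLinearMap.comp_apply]
        have hq : q (T y) = Y.mkQ (T y) := rfl
        rw [hq]
        change Y.mkQ (T y) - Y.mkQ (ι (π (Y.mkQ (T y)))) = 0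
        rw [h1, h2]
        simp
      rw [Submodule.mkQ_apply, Submodule.Quotient.mk_eq_zero] at key
      exact key
  · rintro ⟨F, hF, hinv⟩
    refine ⟨LinearMap.range (F : X →ₗ[ℂ] X), hF, fun y hy => ?_⟩
    have : T y = (T - F) y + F y := by simp
    rw [this]
    exact Submodule.add_mem_sup (hinv y hy) ⟨y, rfl⟩
end

section
/- Let X be a Banach space and T a bounded operator on X. If T admits an almost-invariant half-space, then the adjoint T* on X* also admits an almost-invariant half-space. -/
open NormedSpace

section Aux

variable {X : Type*} [NormedAddCommGroup X] [NormedSpace ℂ X]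

/-- The annihilator of a submodule inside the continuous dual. -/
noncomputable def annCD (W : Submodule ℂ X) : Submodule ℂ (StrongDual ℂ X) where
  carrier := {f | ∀ w ∈ W, f w = 0}
  add_mem' := by
    intro a b ha hb w hw
    simp [ha w hw, hb w hw]
  zero_mem' := by intro w hw; simp
  smul_mem' := by
    intro c f hf w hw
    simp [hf w hw]

lemma mem_annCD {W : Submodule ℂ X} {f : StrongDual ℂ X} :
    f ∈ annCD W ↔ ∀ w ∈ W, f w = 0 := Iff.rfl

lemma annCD_isClosed (W : Submodule ℂ X) : IsClosed (annCD W : Set (StrongDual ℂ X)) := by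
  have h : (annCD W : Set (StrongDual ℂ X)) = ⋂ w ∈ W, {f : StrongDual ℂ X | f w = 0} := by
    ext f
    simp [mem_annCD]
  rw [h]
  refine isClosed_biInter fun w _ => ?_
  have hc : Continuous fun f : StrongDual ℂ X => f w :=
    (inclusionInDoubleDual ℂ X w).continuous
  exact isClosed_eq hc continuous_const

/-- A normed space with finite dimensional continuous dual is finite dimensional. -/
lemma findim_of_dual_findim (E : Type*) [NormedAddCommGroup E] [NormedSpace ℂ E]
    [FiniteDimensional ℂ (StrongDual ℂ E)] : FiniteDimensional ℂ E := by
  haveI h2 : FiniteDimensional ℂ (StrongDual ℂ (StrongDual ℂ E)) :=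
    FiniteDimensional.of_injective
      (ContinuousLinearMap.coeLM ℂ :
        StrongDual ℂ (StrongDual ℂ E) →ₗ[ℂ] (StrongDual ℂ E →ₗ[ℂ] ℂ))
      ContinuousLinearMap.coe_injective
  exact @FiniteDimensional.of_injective _ _ _ _ _ _ _ _
    (inclusionInDoubleDualLi ℂ (E := E)).toLinearMap
    (inclusionInDoubleDualLi ℂ (E := E)).injective h2

lemma fd_of_fd_sub_quot {K V : Type*} [Field K] [AddCommGroup V] [Module K V]
    (p : Submodule K V) [FiniteDimensional K p] [FiniteDimensional K (V ⧸ p)] :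
    FiniteDimensional K V := by
  have h := Submodule.rank_quotient_add_rank p
  have h2 : Module.rank K V < Cardinal.aleph0 := by
    rw [← h]
    exact Cardinal.add_lt_aleph0 (Module.rank_lt_aleph0_iff.mpr ‹_›)
      (Module.rank_lt_aleph0_iff.mpr ‹_›)
  exact Module.rank_lt_aleph0_iff.mp h2

noncomputable instance annSubAddCommGroup {P : Submodule ℂ (StrongDual ℂ X)}
    (K : Submodule ℂ P) : AddCommGroup K :=
  @Submodule.addCommGroup ℂ P _ _ _ K

noncomputable instance annSubHasQuotient {P : Submodule ℂ (StrongDual ℂ X)} :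
    HasQuotient P (Submodule ℂ P) :=
  @Submodule.hasQuotient ℂ P _ _ _

end Aux

set_option maxHeartbeats 2000000 in
/-- If `T` admits an almost-invariant half-space, then so does its Banach-space
adjoint `T*` acting on the dual `X*` (the adjoint action on a functional `f` is
`f ∘ T`). -/
theorem adjoint_almost_invariant_halfspace
    {X : Type*} [NormedAddCommGroup X] [NormedSpace ℂ X] [CompleteSpace X]
    (T : X →L[ℂ] X)
    (h : ∃ Y : Submodule ℂ X, IsClosed (Y : Set X) ∧ ¬FiniteDimensional ℂ Y ∧
        ¬FiniteDimensional ℂ (X ⧸ Y) ∧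
        ∃ M : Submodule ℂ X, FiniteDimensional ℂ M ∧ ∀ y ∈ Y, T y ∈ Y ⊔ M) :
    ∃ Z : Submodule ℂ (StrongDual ℂ X), IsClosed (Z : Set (StrongDual ℂ X)) ∧
      ¬FiniteDimensional ℂ Z ∧ ¬FiniteDimensional ℂ (StrongDual ℂ X ⧸ Z) ∧
      ∃ M : Submodule ℂ (StrongDual ℂ X), FiniteDimensional ℂ M ∧
        ∀ f ∈ Z, f.comp T ∈ Z ⊔ M := by
  obtain ⟨Y, hYc, hYinf, hXYinf, M, hMfd, hTY⟩ := h
  haveI : IsClosed (Y : Set X) := hYc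
  -- the half-space `W = Y ⊔ M`
  set W : Submodule ℂ X := Y ⊔ M with hW
  have hYW : Y ≤ W := le_sup_left
  -- `W` is closed: it is the preimage of the (finite dimensional, hence closed)
  -- image of `M` under the quotient map `X → X ⧸ Y`.
  have hQcont : Continuous (Y.mkQ : X → X ⧸ Y) := by
    refine AddMonoidHomClass.continuous_of_bound Y.mkQ 1 fun x => ?_
    simpa using Submodule.Quotient.norm_mk_le Y x
  haveI : FiniteDimensional ℂ (M.map Y.mkQ) := Module.Finite.map M Y.mkQ
  have hWc : IsClosed (W : Set X) := by
    have hpre : (W : Set X) = Y.mkQ ⁻¹' (M.map Y.mkQ : Set (X ⧸ Y)) := by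
      ext x
      constructor
      · intro hx
        obtain ⟨y, hy, m, hm, rfl⟩ := Submodule.mem_sup.1 hx
        refine ⟨m, hm, ?_⟩
        simp [Submodule.Quotient.mk_add, (Submodule.Quotient.mk_eq_zero Y).2 hy]
      · rintro ⟨m, hm, hmx⟩
        have : x - m ∈ Y := by
          rw [← Submodule.Quotient.mk_eq_zero Y]
          simp only [Submodule.mkQ_apply] at hmx
          simp [Submodule.Quotient.mk_sub, hmx]
        have : x = (x - m) + m := by abel
        rw [this]
        exact Submodule.add_mem_sup ‹x - m ∈ Y› hm
    rw [hpre]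
    exact ((M.map Y.mkQ).closed_of_finiteDimensional).preimage hQcont
  haveI : IsClosed (W : Set X) := hWc
  -- `Z` is the annihilator of `W`
  refine ⟨annCD W, annCD_isClosed W, ?_, ?_, ?_⟩
  · -- `Z` is infinite dimensional
    intro hZfd
    -- the dual of `X ⧸ W` embeds into `Z`
    let Qc : X →L[ℂ] (X ⧸ W) :=
      W.mkQ.mkContinuous 1 (fun x => by simpa using Submodule.Quotient.norm_mk_le W x)
    have hQsurj : Function.Surjective Qc := Submodule.Quotient.mk_surjective W
    let ι : StrongDual ℂ (X ⧸ W) →ₗ[ℂ] StrongDual ℂ X :=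
      { toFun := fun g => g.comp Qc
        map_add' := fun g₁ g₂ => by ext x; simp
        map_smul' := fun c g => by ext x; simp }
    have hιinj : Function.Injective ι := by
      intro g₁ g₂ hg
      ext z
      obtain ⟨x, rfl⟩ := hQsurj z
      have := congrArg (fun (f : StrongDual ℂ X) => f x) hg
      simpa [ι] using this
    have hιZ : ∀ g, ι g ∈ annCD W := by
      intro g w hw
      have : Qc w = 0 := by
        show W.mkQ w = 0
        simpa using (Submodule.Quotient.mk_eq_zero W).2 hw
      simp [ι, this]
    let ι' : StrongDual ℂ (X ⧸ W) →ₗ[ℂ] annCD W := LinearMap.codRestrict _ ι hιZ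
    have hι'inj : Function.Injective ι' := by
      intro g₁ g₂ hg
      exact hιinj (congrArg Subtype.val hg)
    haveI : FiniteDimensional ℂ (StrongDual ℂ (X ⧸ W)) :=
      @FiniteDimensional.of_injective _ _ _ _ _ _ _ _ ι' hι'inj hZfd
    haveI : FiniteDimensional ℂ (X ⧸ W) := findim_of_dual_findim (X ⧸ W)
    -- deduce that `X ⧸ Y` is finite dimensional, contradiction
    haveI : FiniteDimensional ℂ ((X ⧸ Y) ⧸ (W.map Y.mkQ)) :=
      Module.Finite.equiv (Submodule.quotientQuotientEquivQuotient Y W hYW).symm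
    have hmapeq : W.map Y.mkQ = M.map Y.mkQ := by
      rw [hW, Submodule.map_sup]
      have hbot : Y.map Y.mkQ = ⊥ := by
        rw [eq_bot_iff]
        rintro z ⟨y, hy, rfl⟩
        simp [(Submodule.Quotient.mk_eq_zero Y).2 hy]
      rw [hbot, bot_sup_eq]
    haveI : FiniteDimensional ℂ (W.map Y.mkQ) := by
      rw [hmapeq]; infer_instance
    exact hXYinf (fd_of_fd_sub_quot (W.map Y.mkQ))
  · -- the quotient `Dual X ⧸ Z` is infinite dimensional
    intro hfd
    -- restriction to `W` is surjective with kernel `Z`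
    let R : StrongDual ℂ X →ₗ[ℂ] StrongDual ℂ W :=
      { toFun := fun f => f.comp W.subtypeL
        map_add' := fun f g => by ext x; simp
        map_smul' := fun c f => by ext x; simp }
    have hRsurj : Function.Surjective R := by
      intro g
      obtain ⟨f, hf, -⟩ := exists_extension_norm_eq W g
      exact ⟨f, by ext w; exact hf w⟩
    have hker : LinearMap.ker R = annCD W := by
      ext f
      constructor
      · intro hf w hw
        have := congrArg (fun (g : StrongDual ℂ W) => g ⟨w, hw⟩) (LinearMap.mem_ker.1 hf)
        simpa [R] using this
      · intro hf
        rw [LinearMap.mem_ker]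
        ext w
        exact hf w.1 w.2
    haveI : FiniteDimensional ℂ (StrongDual ℂ X ⧸ LinearMap.ker R) := by rwa [hker]
    haveI : FiniteDimensional ℂ (StrongDual ℂ W) :=
      Module.Finite.equiv (R.quotKerEquivOfSurjective hRsurj)
    haveI : FiniteDimensional ℂ W := findim_of_dual_findim W
    exact hYinf (Submodule.finiteDimensional_of_le hYW)
  · -- almost invariance
    set TM : Submodule ℂ X := M.map (T : X →ₗ[ℂ] X) with hTM
    haveI : FiniteDimensional ℂ TM := Module.Finite.map M _
    -- restriction of functionals in `Z` to `TM`
    let φ : annCD W →ₗ[ℂ] (TM →ₗ[ℂ] ℂ) :=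
      { toFun := fun f => (f.1 : X →ₗ[ℂ] ℂ).comp TM.subtype
        map_add' := fun f g => by ext x; simp
        map_smul' := fun c f => by ext x; simp }
    set K : Submodule ℂ (annCD W) := LinearMap.ker φ with hK
    haveI hfdd : FiniteDimensional ℂ (TM →ₗ[ℂ] ℂ) := by infer_instance
    haveI : FiniteDimensional ℂ (LinearMap.range φ) :=
      FiniteDimensional.finiteDimensional_submodule (LinearMap.range φ)
    obtain ⟨C, hC⟩ : ∃ C : Submodule ℂ (annCD W), IsCompl K C :=
      Submodule.exists_isCompl (K := ℂ) (V := annCD W) K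
    haveI : FiniteDimensional ℂ C := by
      refine @FiniteDimensional.of_injective _ _ _ _ _ _ _ _ (φ.comp C.subtype) ?_ hfdd
      intro a b hab
      have h1 : (a : annCD W) - b ∈ K := by
        rw [hK, LinearMap.mem_ker, LinearMap.map_sub (R := ℂ) (M := annCD W)]
        exact sub_eq_zero.2 hab
      have h2 : (a : annCD W) - b ∈ C := @Submodule.sub_mem ℂ (annCD W) _ _ _ C _ _ a.2 b.2
      have h3 := (Submodule.disjoint_def.1 hC.disjoint) _ h1 h2
      exact Subtype.ext (sub_eq_zero.1 h3)
    -- the adjoint action as a linear map on the dual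
    let L : StrongDual ℂ X →ₗ[ℂ] StrongDual ℂ X :=
      (((ContinuousLinearMap.compL ℂ X X ℂ).flip T) :
        StrongDual ℂ X →L[ℂ] StrongDual ℂ X).toLinearMap
    have hLapp : ∀ g : StrongDual ℂ X, L g = g.comp T := fun g => rfl
    refine ⟨(C.map (annCD W).subtype).map L, ?_, ?_⟩
    · haveI : FiniteDimensional ℂ (C.map (annCD W).subtype) :=
        Module.Finite.map C _
      exact Module.Finite.map _ L
    · intro f hf
      obtain ⟨k, hk, c, hc, hkc⟩ :=
        Submodule.mem_sup.1 (by rw [hC.sup_eq_top]; trivial :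
          (⟨f, hf⟩ : annCD W) ∈ K ⊔ C)
      have hfeq : f = (k : StrongDual ℂ X) + (c : StrongDual ℂ X) := by
        have := congrArg Subtype.val hkc
        simpa using this.symm
      have hkT : (k : StrongDual ℂ X).comp T ∈ annCD W := by
        intro w hw
        obtain ⟨y, hy, m, hm, rfl⟩ := Submodule.mem_sup.1 hw
        have h1 : (k : StrongDual ℂ X) (T y) = 0 := by
          have hTy : T y ∈ W := hTY y hy
          exact k.2 (T y) hTy
        have h2 : (k : StrongDual ℂ X) (T m) = 0 := by
          have hTm : T m ∈ TM := ⟨m, hm, rfl⟩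
          have := congrArg (fun (g : TM →ₗ[ℂ] ℂ) => g ⟨T m, hTm⟩)
            (LinearMap.mem_ker.1 hk)
          simpa [φ] using this
        simp [map_add, h1, h2]
      have hcT : (c : StrongDual ℂ X).comp T ∈ (C.map (annCD W).subtype).map L := by
        refine Submodule.mem_map_of_mem ?_
        exact Submodule.mem_map_of_mem hc
      refine Submodule.mem_sup.2 ⟨(k : StrongDual ℂ X).comp T, hkT,
        (c : StrongDual ℂ X).comp T, hcT, ?_⟩
      rw [hfeq, ContinuousLinearMap.add_comp]
end

section
/- Let H be a Hilbert space, T a bounded operator on H, Y a closed subspace of H, and P the orthogonal projection onto Y. If Y is almost-invariant for T with finite-dimensional defect subspace M, then Y is invariant under T − F where F = (I − P)TP, and F has finite rank. -/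
/-- If `Y` is almost-invariant for `T` with finite-dimensional defect subspace `M`,
then `Y` is invariant under `T - F` where `F = (I - P) T P`, `P` being the
orthogonal projection onto `Y`, and `F` has finite rank. -/
theorem invariant_under_projection_perturbation
    {H : Type*} [NormedAddCommGroup H] [InnerProductSpace ℂ H] [CompleteSpace H]
    (T : H →L[ℂ] H) (Y : Submodule ℂ H) [CompleteSpace Y]
    (M : Submodule ℂ H) (hM : FiniteDimensional ℂ M)
    (hinv : ∀ y ∈ Y, T y ∈ Y ⊔ M) :
    (∀ y ∈ Y,
      (T - (ContinuousLinearMap.id ℂ H - Y.subtypeL.comp (Submodule.orthogonalProjection Y)).comp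
          (T.comp (Y.subtypeL.comp (Submodule.orthogonalProjection Y)))) y ∈ Y) ∧
    FiniteDimensional ℂ
      (LinearMap.range
        (((ContinuousLinearMap.id ℂ H - Y.subtypeL.comp (Submodule.orthogonalProjection Y)).comp
          (T.comp (Y.subtypeL.comp (Submodule.orthogonalProjection Y)))) : H →ₗ[ℂ] H)) := by
  set Q := Y.subtypeL.comp (Submodule.orthogonalProjection Y) with hQ
  have hQmem : ∀ x : H, Q x ∈ Y := fun x => (Submodule.orthogonalProjection Y x).2
  have hQid : ∀ y ∈ Y, Q y = y := fun y hy => by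
    simp [hQ, ← Submodule.starProjection_apply, Submodule.starProjection_eq_self_iff.mpr hy]
  constructor
  · intro y hy
    have : (T - (ContinuousLinearMap.id ℂ H - Q).comp (T.comp Q)) y = Q (T y) := by
      simp [ContinuousLinearMap.sub_apply, ContinuousLinearMap.comp_apply,
        hQid y hy]
    rw [this]
    exact hQmem _
  · have hle : LinearMap.range (((ContinuousLinearMap.id ℂ H - Q).comp (T.comp Q)) : H →ₗ[ℂ] H)
        ≤ M.map ((ContinuousLinearMap.id ℂ H - Q) : H →ₗ[ℂ] H) := by
      rintro _ ⟨x, rfl⟩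
      have hx : T (Q x) ∈ Y ⊔ M := hinv _ (hQmem x)
      rw [Submodule.mem_sup] at hx
      obtain ⟨y, hy, m, hm, hsum⟩ := hx
      refine ⟨m, hm, ?_⟩
      show (ContinuousLinearMap.id ℂ H - Q) m
          = ((ContinuousLinearMap.id ℂ H - Q).comp (T.comp Q)) x
      have h1 : ((ContinuousLinearMap.id ℂ H - Q).comp (T.comp Q)) x
          = (y + m) - Q (y + m) := by
        simp [ContinuousLinearMap.comp_apply, ContinuousLinearMap.sub_apply, hsum]
      rw [h1, ContinuousLinearMap.sub_apply, map_add, hQid y hy]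
      simp only [ContinuousLinearMap.id_apply]
      abel
    have : FiniteDimensional ℂ (M.map ((ContinuousLinearMap.id ℂ H - Q) : H →ₗ[ℂ] H)) :=
      Module.Finite.map M ((ContinuousLinearMap.id ℂ H - Q) : H →ₗ[ℂ] H)
    exact Submodule.finiteDimensional_of_le hle
end

section
/- Every infinite-dimensional Banach space contains a half-space, i.e., a closed subspace of infinite dimension and infinite codimension. -/
open Submodule

section Aux

variable {𝕜 X : Type*} [RCLike 𝕜] [NormedAddCommGroup X] [NormedSpace 𝕜 X]

/-- The quotient map as a continuous linear map. -/
noncomputable def mkQL (N : Submodule 𝕜 X) (hN : IsClosed (N : Set X)) : X →L[𝕜] X ⧸ N :=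
  haveI : IsClosed (N : Set X) := hN
  LinearMap.mkContinuous N.mkQ 1 fun x => by
    simpa using Submodule.Quotient.norm_mk_le N x

theorem mkQL_apply (N : Submodule 𝕜 X) (hN : IsClosed (N : Set X)) (x : X) :
    mkQL N hN x = Submodule.Quotient.mk x := rfl

/-- One step of the biorthogonal construction. -/
theorem step (hX : ¬FiniteDimensional 𝕜 X) (n : ℕ) (x : Fin n → X)
    (f : Fin n → (X →L[𝕜] 𝕜)) :
    ∃ p : X × (X →L[𝕜] 𝕜), (∀ i, f i p.1 = 0) ∧ (∀ i, p.2 (x i) = 0) ∧ p.2 p.1 = 1 := by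
  classical
  set K : Submodule 𝕜 X := ⨅ i, LinearMap.ker ((f i : X →ₗ[𝕜] 𝕜)) with hKdef
  set N : Submodule 𝕜 X := Submodule.span 𝕜 (Set.range x) with hNdef
  haveI : FiniteDimensional 𝕜 N := FiniteDimensional.span_of_finite 𝕜 (Set.finite_range x)
  have hKN : ¬ (K ≤ N) := by
    intro hle
    apply hX
    haveI hKfd : FiniteDimensional 𝕜 K := Submodule.finiteDimensional_of_le hle
    have hQfd : FiniteDimensional 𝕜 (X ⧸ K) := by
      have hker : K ≤ LinearMap.ker (LinearMap.pi (fun i => (f i : X →ₗ[𝕜] 𝕜))) := by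
        rw [LinearMap.ker_pi]
      have hinj : Function.Injective
          (K.liftQ (LinearMap.pi (fun i => (f i : X →ₗ[𝕜] 𝕜))) hker) := by
        rw [← LinearMap.ker_eq_bot, Submodule.ker_liftQ_eq_bot]
        rw [LinearMap.ker_pi]
      exact FiniteDimensional.of_injective _ hinj
    have : IsNoetherian 𝕜 X := by
      rw [isNoetherian_iff_submodule_quotient K]
      exact ⟨IsNoetherian.iff_fg.2 hKfd, IsNoetherian.iff_fg.2 hQfd⟩
    exact IsNoetherian.iff_fg.1 this
  obtain ⟨a, haK, haN⟩ := SetLike.not_le_iff_exists.mp hKN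
  have hNclosed : IsClosed (N : Set X) := N.closed_of_finiteDimensional
  haveI : IsClosed (N : Set X) := hNclosed
  have hmk : (Submodule.Quotient.mk a : X ⧸ N) ≠ 0 := by
    simpa [Submodule.Quotient.mk_eq_zero] using haN
  obtain ⟨g', hg'⟩ := SeparatingDual.exists_eq_one (R := 𝕜) hmk
  refine ⟨⟨a, g'.comp (mkQL N hNclosed)⟩, ?_, ?_, ?_⟩
  · intro i
    have : a ∈ LinearMap.ker ((f i : X →ₗ[𝕜] 𝕜)) := by
      exact (Submodule.mem_iInf _).1 haK i
    simpa using this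
  · intro i
    have hxi : x i ∈ N := Submodule.subset_span ⟨i, rfl⟩
    simp only [ContinuousLinearMap.comp_apply, _root_.mkQL_apply]
    rw [(Submodule.Quotient.mk_eq_zero N).2 hxi, map_zero]
  · simpa [_root_.mkQL_apply] using hg'

/-- The biorthogonal sequence `(xₙ, fₙ)`. -/
noncomputable def seq (hX : ¬FiniteDimensional 𝕜 X) : ℕ → X × (X →L[𝕜] 𝕜) := fun n =>
  (step hX n (fun i : Fin n => (seq hX i).1) (fun i : Fin n => (seq hX i).2)).choose
termination_by n => n
decreasing_by all_goals exact i.isLt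

theorem seq_spec (hX : ¬FiniteDimensional 𝕜 X) (n : ℕ) :
    (∀ i : Fin n, (seq hX i).2 (seq hX n).1 = 0) ∧
    (∀ i : Fin n, (seq hX n).2 (seq hX i).1 = 0) ∧
    (seq hX n).2 (seq hX n).1 = 1 := by
  have h := (step hX n (fun i : Fin n => (seq hX (i : ℕ)).1)
      (fun i : Fin n => (seq hX (i : ℕ)).2)).choose_spec
  rw [show (seq hX n) = (step hX n (fun i : Fin n => (seq hX (i : ℕ)).1)
      (fun i : Fin n => (seq hX (i : ℕ)).2)).choose from by rw [seq]]
  exact h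

theorem seq_biorth (hX : ¬FiniteDimensional 𝕜 X) (i j : ℕ) :
    (seq hX i).2 (seq hX j).1 = if i = j then 1 else 0 := by
  rcases lt_trichotomy i j with h | h | h
  · rw [if_neg h.ne]
    exact (seq_spec hX j).1 ⟨i, h⟩
  · subst h; rw [if_pos rfl]; exact (seq_spec hX i).2.2
  · rw [if_neg h.ne']
    exact (seq_spec hX i).2.1 ⟨j, h⟩

theorem linearIndependent_of_dual {K M ι : Type*} [Field K] [AddCommGroup M] [Module K M]
    [DecidableEq ι] (v : ι → M) (f : ι → M →ₗ[K] K) (h : ∀ i j, f i (v j) = if i = j then 1 else 0) :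
    LinearIndependent K v := by
  classical
  rw [linearIndependent_iff']
  intro s g hg i hi
  have h2 := congrArg (f i) hg
  simp only [map_sum, map_smul, h, smul_eq_mul, map_zero] at h2
  rwa [Finset.sum_eq_single i (fun j _ hji => by rw [if_neg (Ne.symm hji), mul_zero])
    (fun h' => absurd hi h'), if_pos rfl, mul_one] at h2

theorem not_finiteDimensional_of_li {K M : Type*} [Field K] [AddCommGroup M] [Module K M]
    (v : ℕ → M) (hv : LinearIndependent K v) : ¬FiniteDimensional K M := by
  intro hfd
  exact Module.Finite.not_linearIndependent_of_infinite v hv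

end Aux

/-- Every infinite-dimensional Banach space (over ℝ or ℂ) contains a half-space:
a closed subspace of infinite dimension and infinite codimension. -/
theorem exists_halfspace
    (𝕜 X : Type*) [RCLike 𝕜] [NormedAddCommGroup X] [NormedSpace 𝕜 X]
    [CompleteSpace X] (hX : ¬FiniteDimensional 𝕜 X) :
    ∃ Y : Submodule 𝕜 X, IsClosed (Y : Set X) ∧ ¬FiniteDimensional 𝕜 Y ∧
      ¬FiniteDimensional 𝕜 (X ⧸ Y) := by
  classical
  set xs : ℕ → X := fun n => (seq hX n).1 with hxs
  set fs : ℕ → (X →L[𝕜] 𝕜) := fun n => (seq hX n).2 with hfs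
  have hbi : ∀ i j, fs i (xs j) = if i = j then 1 else 0 := fun i j => seq_biorth hX i j
  set Y : Submodule 𝕜 X := ⨅ n : ℕ, LinearMap.ker (fs (2 * n + 1) : X →ₗ[𝕜] 𝕜) with hY
  have hYmem : ∀ z, z ∈ Y ↔ ∀ n, fs (2 * n + 1) z = 0 := by
    intro z
    simp [hY, Submodule.mem_iInf, LinearMap.mem_ker]
  have hYclosed : IsClosed (Y : Set X) := by
    rw [hY]
    rw [Submodule.coe_iInf]
    exact isClosed_iInter fun n => ContinuousLinearMap.isClosed_ker (fs (2 * n + 1))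
  refine ⟨Y, hYclosed, ?_, ?_⟩
  · -- Y is infinite-dimensional: it contains all x_{2n}
    have hmem : ∀ n : ℕ, xs (2 * n) ∈ Y := by
      intro n
      rw [hYmem]
      intro m
      rw [hbi]
      rw [if_neg (by omega)]
    set v : ℕ → Y := fun n => ⟨xs (2 * n), hmem n⟩ with hv
    have hli : LinearIndependent 𝕜 v := by
      refine linearIndependent_of_dual v
        (fun n => ((fs (2 * n) : X →ₗ[𝕜] 𝕜).comp Y.subtype)) (fun i j => ?_)
      simp only [LinearMap.comp_apply, Submodule.coe_subtype, ContinuousLinearMap.coe_coe]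
      show fs (2 * i) (xs (2 * j)) = _
      rw [hbi]
      by_cases h : i = j
      · subst h; simp
      · rw [if_neg (by omega), if_neg h]
    exact not_finiteDimensional_of_li v hli
  · -- X ⧸ Y is infinite-dimensional: the classes of x_{2n+1} are independent
    set w : ℕ → X ⧸ Y := fun n => Submodule.Quotient.mk (xs (2 * n + 1)) with hw
    have hYle : ∀ k : ℕ, Y ≤ LinearMap.ker ((fs (2 * k + 1) : X →ₗ[𝕜] 𝕜)) := by
      intro k z hz
      have := (hYmem z).1 hz k
      simpa using this
    set F : ℕ → (X ⧸ Y) →ₗ[𝕜] 𝕜 :=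
      fun k => Y.liftQ ((fs (2 * k + 1) : X →ₗ[𝕜] 𝕜)) (hYle k) with hF
    have hli : LinearIndependent 𝕜 w := by
      refine linearIndependent_of_dual w F (fun i j => ?_)
      show Y.liftQ ((fs (2 * i + 1) : X →ₗ[𝕜] 𝕜)) (hYle i) (Submodule.Quotient.mk (xs (2 * j + 1))) = _
      rw [Submodule.liftQ_apply, ContinuousLinearMap.coe_coe, hbi]
      by_cases h : i = j
      · subst h; simp
      · rw [if_neg (by omega), if_neg h]
    exact not_finiteDimensional_of_li w hli
end

section
/- Let X be a Banach space, T ∈ B(X), e ∈ X a nonzero vector, and A ⊆ ρ(T) a subset of the resolvent set. Define h(λ, e) = (λI − T)^{-1} e for λ ∈ A, and let Y be the closed linear span of {h(λ, e) : λ ∈ A}. Then T(Y) ⊆ Y + span{e}; in particular, Y is almost-invariant for T with defect at most one. -/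
/-- For `A ⊆ ρ(T)` and `e ≠ 0`, the closed span `Y` of the resolvent vectors
`h(λ, e) = (λI - T)⁻¹ e`, `λ ∈ A`, satisfies `T(Y) ⊆ Y + span{e}`; in particular
`Y` is almost-invariant for `T` with defect at most one. -/
theorem resolvent_span_almost_invariant
    {X : Type*} [NormedAddCommGroup X] [NormedSpace ℂ X] [CompleteSpace X]
    (T : X →L[ℂ] X) (e : X) (he : e ≠ 0) (A : Set ℂ)
    (hA : A ⊆ resolventSet ℂ T) :
    ∀ y ∈ (Submodule.span ℂ ((fun z => resolvent T z e) '' A)).topologicalClosure,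
      T y ∈ (Submodule.span ℂ ((fun z => resolvent T z e) '' A)).topologicalClosure ⊔
        Submodule.span ℂ {e} := by
  intro y hy
  set Y : Submodule ℂ X := Submodule.span ℂ ((fun z => resolvent T z e) '' A) with hYdef
  set P : Submodule ℂ X := Submodule.span ℂ ({e} : Set X) with hPdef
  set W : Submodule ℂ X := Y.topologicalClosure ⊔ P with hWdef
  -- key identity
  have key : ∀ z ∈ A, T (resolvent T z e) = z • resolvent T z e - e := by
    intro z hz
    have hu : IsUnit (algebraMap ℂ (X →L[ℂ] X) z - T) := hA hz
    have h1 : (algebraMap ℂ (X →L[ℂ] X) z - T) * resolvent T z = 1 := by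
      rw [resolvent]
      exact Ring.mul_inverse_cancel _ hu
    have h2 := congrArg (fun S : X →L[ℂ] X => S e) h1
    simp only [ContinuousLinearMap.mul_apply, ContinuousLinearMap.sub_apply,
      ContinuousLinearMap.one_apply, Algebra.algebraMap_eq_smul_one,
      ContinuousLinearMap.smul_apply] at h2
    have h2' : z • resolvent T z e - T (resolvent T z e) = e := h2
    linear_combination (norm := module) -h2'
  -- T maps Y into W
  have hTY : ∀ x ∈ Y, T x ∈ W := by
    intro x hx
    induction hx using Submodule.span_induction with
    | mem x hx =>
      obtain ⟨z, hz, rfl⟩ := hx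
      rw [key z hz]
      exact sub_mem
        (Submodule.mem_sup_left (Y.topologicalClosure.smul_mem z
          (Y.le_topologicalClosure (Submodule.subset_span ⟨z, hz, rfl⟩))))
        (Submodule.mem_sup_right (Submodule.subset_span rfl))
    | zero => simp
    | add a b _ _ ha hb => rw [map_add]; exact W.add_mem ha hb
    | smul c a _ ha => rw [map_smul]; exact W.smul_mem c ha
  -- W is closed
  have hWclosed : IsClosed (W : Set X) := by
    haveI : IsClosed (Y.topologicalClosure : Set X) := Y.isClosed_topologicalClosure
    have hmap : Submodule.map Y.topologicalClosure.mkQ P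
        = Submodule.span ℂ {Y.topologicalClosure.mkQ e} := by
      rw [hPdef, Submodule.map_span, Set.image_singleton]
    have hclosed : IsClosed
        ((Submodule.span ℂ {Y.topologicalClosure.mkQ e} : Submodule ℂ (X ⧸ Y.topologicalClosure)) :
          Set (X ⧸ Y.topologicalClosure)) :=
      Submodule.closed_of_finiteDimensional _
    have hW : (W : Set X) = Y.topologicalClosure.mkQ ⁻¹'
        (Submodule.span ℂ {Y.topologicalClosure.mkQ e} : Set (X ⧸ Y.topologicalClosure)) := by
      rw [← hmap, hWdef, ← Submodule.comap_map_mkQ]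
      rfl
    rw [hW]
    exact hclosed.preimage Y.topologicalClosure.isOpenQuotientMap_mkQ.continuous
  -- conclude
  have : T y ∈ closure (W : Set X) :=
    map_mem_closure T.continuous hy hTY
  exact hWclosed.closure_subset this
end
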